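/- For every urn i ∈ {1,…,n}, E_i(i) ≤ 2(n'−1)/(ε·M) + 1/n. -/

import Mathlib

/- STATEMENT 17: In the generalized (landmark) bichromatic scheme,
E_i(i) ≤ 2(n'−1)/(ε·M) + 1/n for every urn i. -/
theorem stmt_17
    (n' n : ℕ) (hn' : 10 ≤ n') (hn : 2 ≤ n)
    (p' : ℕ → ℝ)
    (hp'0 : 0 ≤ p' 1) (hp'1 : p' n' ≤ 1)
    (hp'mono : ∀ k ∈ Finset.Ico 1 n', p' k < p' (k + 1))
    (ε : ℝ)
    (hε : IsLeast {x : ℝ | ∃ k, 1 ≤ k ∧ k < n' ∧ x = p' (k + 1) - p' k} ε)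
    (p : ℕ → ℝ)
    (hp01 : ∀ i ∈ Finset.Icc 1 n, 0 ≤ p i ∧ p i ≤ 1)
    (hpmono : ∀ i ∈ Finset.Ico 1 n, p i ≤ p (i + 1))
    (b r : ℕ → ℝ)
    (hb : ∀ k, b k = ∑ ℓ ∈ Finset.Ico 1 k, (2 - (p' (ℓ + 1) + p' ℓ)) / (p' (ℓ + 1) - p' ℓ))
    (hr : ∀ k, r k = ∑ ℓ ∈ Finset.Ico k n', (p' (ℓ + 1) + p' ℓ) / (p' (ℓ + 1) - p' ℓ))
    (φ : ℕ → ℕ)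
    (hφmem : ∀ i ∈ Finset.Icc 1 n, φ i ∈ Finset.Icc 1 n')
    (hφmax : ∀ i ∈ Finset.Icc 1 n, ∀ k ∈ Finset.Icc 1 n',
        p i * b k + (1 - p i) * r k ≤ p i * b (φ i) + (1 - p i) * r (φ i))
    (R B M : ℝ)
    (hR : R = ∑ k ∈ Finset.Icc 1 n',
        ((((Finset.Icc 1 n).filter (fun i => φ i = k)).card : ℝ) + 1) * r k)
    (hB : B = ∑ k ∈ Finset.Icc 1 n',
        ((((Finset.Icc 1 n).filter (fun i => φ i = k)).card : ℝ) + 1) * b k)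
    (hM : M = max R B)
    (Rv Bv : ℕ → ℝ)
    (hRv : ∀ j, Rv j = (r (φ j) + (M - R) / n) / M)
    (hBv : ∀ j, Bv j = (b (φ j) + (M - B) / n) / M)
    (E : ℕ → ℕ → ℝ)
    (hE : ∀ i j, E i j = p i * Bv j + (1 - p i) * Rv j) :
    ∀ i ∈ Finset.Icc 1 n, E i i ≤ 2 * ((n' : ℝ) - 1) / (ε * M) + 1 / n := by
  -- positivity of ε
  obtain ⟨⟨k₀, hk₀1, hk₀2, hk₀eq⟩, hεlb⟩ := hε
  have hεpos : 0 < ε := by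
    rw [hk₀eq]
    have := hp'mono k₀ (Finset.mem_Ico.mpr ⟨hk₀1, hk₀2⟩)
    linarith
  -- monotonicity of p'
  have hmono : ∀ a b : ℕ, 1 ≤ a → a ≤ b → b ≤ n' → p' a ≤ p' b := by
    intro a b
    induction b with
    | zero => intro ha hab _; omega
    | succ m ih =>
      intro ha hab hb
      rcases eq_or_lt_of_le hab with h | h
      · rw [h]
      · have hle := ih ha (by omega) (by omega)
        exact hle.trans (hp'mono m (Finset.mem_Ico.mpr ⟨by omega, by omega⟩)).le
  -- per-interval facts
  have hgap : ∀ ℓ ∈ Finset.Ico 1 n', ε ≤ p' (ℓ + 1) - p' ℓ := by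
    intro ℓ hℓ
    rw [Finset.mem_Ico] at hℓ
    exact hεlb ⟨ℓ, hℓ.1, hℓ.2, rfl⟩
  have hgpos : ∀ ℓ ∈ Finset.Ico 1 n', 0 < p' (ℓ + 1) - p' ℓ := fun ℓ hℓ =>
    lt_of_lt_of_le hεpos (hgap ℓ hℓ)
  have hs0 : ∀ ℓ ∈ Finset.Ico 1 n', 0 ≤ p' (ℓ + 1) + p' ℓ := by
    intro ℓ hℓ
    rw [Finset.mem_Ico] at hℓ
    have h1 := hmono 1 ℓ le_rfl hℓ.1 (by omega)
    have h2 := hmono 1 (ℓ + 1) le_rfl (by omega) (by omega)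
    linarith
  have hs2 : ∀ ℓ ∈ Finset.Ico 1 n', p' (ℓ + 1) + p' ℓ ≤ 2 := by
    intro ℓ hℓ
    rw [Finset.mem_Ico] at hℓ
    have h1 := hmono ℓ n' hℓ.1 (by omega) le_rfl
    have h2 := hmono (ℓ + 1) n' (by omega) (by omega) le_rfl
    linarith
  set X : ℝ := 2 * ((n' : ℝ) - 1) / ε with hX
  -- bounds on b and r
  have hbbound : ∀ k ∈ Finset.Icc 1 n', 0 ≤ b k ∧ b k ≤ X := by
    intro k hk
    rw [Finset.mem_Icc] at hk
    constructor
    · rw [hb]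
      apply Finset.sum_nonneg
      intro ℓ hℓ
      have hℓ' : ℓ ∈ Finset.Ico 1 n' := by
        rw [Finset.mem_Ico] at hℓ ⊢; omega
      exact div_nonneg (by linarith [hs2 ℓ hℓ']) (hgpos ℓ hℓ').le
    · rw [hb]
      calc ∑ ℓ ∈ Finset.Ico 1 k, (2 - (p' (ℓ + 1) + p' ℓ)) / (p' (ℓ + 1) - p' ℓ)
          ≤ ∑ ℓ ∈ Finset.Ico 1 k, 2 / ε := by
            apply Finset.sum_le_sum
            intro ℓ hℓ
            have hℓ' : ℓ ∈ Finset.Ico 1 n' := by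
              rw [Finset.mem_Ico] at hℓ ⊢; omega
            exact div_le_div₀ (by norm_num) (by linarith [hs0 ℓ hℓ']) hεpos (hgap ℓ hℓ')
        _ = ((k : ℝ) - 1) * (2 / ε) := by
            rw [Finset.sum_const, Nat.card_Ico, nsmul_eq_mul]
            congr 1
            have : (1 : ℕ) ≤ k := hk.1
            push_cast [Nat.cast_sub this]
            ring
        _ ≤ ((n' : ℝ) - 1) * (2 / ε) := by
            apply mul_le_mul_of_nonneg_right
            · have : (k : ℝ) ≤ (n' : ℝ) := by exact_mod_cast hk.2
              linarith
            · positivity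
        _ = X := by rw [hX]; field_simp
  have hrbound : ∀ k ∈ Finset.Icc 1 n', 0 ≤ r k ∧ r k ≤ X := by
    intro k hk
    rw [Finset.mem_Icc] at hk
    constructor
    · rw [hr]
      apply Finset.sum_nonneg
      intro ℓ hℓ
      have hℓ' : ℓ ∈ Finset.Ico 1 n' := by
        rw [Finset.mem_Ico] at hℓ ⊢; omega
      exact div_nonneg (hs0 ℓ hℓ') (hgpos ℓ hℓ').le
    · rw [hr]
      calc ∑ ℓ ∈ Finset.Ico k n', (p' (ℓ + 1) + p' ℓ) / (p' (ℓ + 1) - p' ℓ)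
          ≤ ∑ ℓ ∈ Finset.Ico k n', 2 / ε := by
            apply Finset.sum_le_sum
            intro ℓ hℓ
            have hℓ' : ℓ ∈ Finset.Ico 1 n' := by
              rw [Finset.mem_Ico] at hℓ ⊢; omega
            exact div_le_div₀ (by norm_num) (hs2 ℓ hℓ') hεpos (hgap ℓ hℓ')
        _ = ((n' : ℝ) - (k : ℝ)) * (2 / ε) := by
            rw [Finset.sum_const, Nat.card_Ico, nsmul_eq_mul]
            push_cast [Nat.cast_sub hk.2]; ring
        _ ≤ ((n' : ℝ) - 1) * (2 / ε) := by
            apply mul_le_mul_of_nonneg_right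
            · have : (1 : ℝ) ≤ (k : ℝ) := by exact_mod_cast hk.1
              linarith
            · positivity
        _ = X := by rw [hX]; field_simp
  -- r 1 > 0
  have hr1pos : 0 < r 1 := by
    rw [hr]
    apply Finset.sum_pos
    · intro ℓ hℓ
      have hsℓ : 0 < p' (ℓ + 1) + p' ℓ := by
        rw [Finset.mem_Ico] at hℓ
        have h1 := hmono 1 ℓ le_rfl hℓ.1 (by omega)
        have h2 := hmono 2 (ℓ + 1) (by norm_num) (by omega) (by omega)
        have h3 := hp'mono 1 (Finset.mem_Ico.mpr ⟨le_rfl, by omega⟩)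
        linarith
      exact div_pos hsℓ (hgpos ℓ hℓ)
    · exact ⟨1, Finset.mem_Ico.mpr ⟨le_rfl, by omega⟩⟩
  -- nonnegativity of R and B, positivity of M
  have hterm_nonneg : ∀ k ∈ Finset.Icc 1 n',
      (0:ℝ) ≤ ((((Finset.Icc 1 n).filter (fun i => φ i = k)).card : ℝ) + 1) * r k :=
    fun k hk => mul_nonneg (by positivity) (hrbound k hk).1
  have hRpos : 0 < R := by
    have h1mem : (1 : ℕ) ∈ Finset.Icc 1 n' := Finset.mem_Icc.mpr ⟨le_rfl, by omega⟩
    have := Finset.single_le_sum hterm_nonneg h1mem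
    rw [← hR] at this
    have hc : (1:ℝ) ≤ ((((Finset.Icc 1 n).filter (fun i => φ i = 1)).card : ℝ) + 1) := by
      have := Nat.cast_nonneg (α := ℝ) (((Finset.Icc 1 n).filter (fun i => φ i = 1)).card)
      linarith
    nlinarith
  have hBnn : 0 ≤ B := by
    rw [hB]
    exact Finset.sum_nonneg fun k hk => mul_nonneg (by positivity) (hbbound k hk).1
  have hMpos : 0 < M := lt_of_lt_of_le hRpos (hM ▸ le_max_left R B)
  have hRnn : 0 ≤ R := hRpos.le
  have hMR : R ≤ M := hM ▸ le_max_left R B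
  have hMB : B ≤ M := hM ▸ le_max_right R B
  -- main estimate
  intro i hi
  obtain ⟨hpi0, hpi1⟩ := hp01 i hi
  have hφi := hφmem i hi
  obtain ⟨hbφ0, hbφX⟩ := hbbound (φ i) hφi
  obtain ⟨hrφ0, hrφX⟩ := hrbound (φ i) hφi
  have hn0 : (0:ℝ) < n := by exact_mod_cast (by omega : 0 < n)
  have hE' : E i i = (p i * b (φ i) + (1 - p i) * r (φ i)) / M
      + (p i * (M - B) + (1 - p i) * (M - R)) / (n * M) := by
    rw [hE, hBv, hRv]
    field_simp
    ring
  have h1 : p i * b (φ i) + (1 - p i) * r (φ i) ≤ X := by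
    nlinarith [mul_le_mul_of_nonneg_left hbφX hpi0,
      mul_le_mul_of_nonneg_left hrφX (by linarith : (0:ℝ) ≤ 1 - p i)]
  have h2 : p i * (M - B) + (1 - p i) * (M - R) ≤ M := by
    nlinarith [mul_nonneg hpi0 hBnn, mul_nonneg (by linarith : (0:ℝ) ≤ 1 - p i) hRnn]
  have key : E i i ≤ X / M + M / (n * M) := by
    rw [hE']
    gcongr
  have hXM : X / M = 2 * ((n' : ℝ) - 1) / (ε * M) := by
    rw [hX, div_div]
  have hMnM : M / (n * M) = 1 / (n:ℝ) := by
    rw [mul_comm, div_mul_eq_div_div, div_self hMpos.ne', one_div]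
  rw [hXM, hMnM] at key
  exact key
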